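/- Let n ≥ 2 and m ≥ 2 be integers, let f ∈ R_m = ℤ[x_1, ..., x_m], and let 1 ≤ i < j ≤ m. Then c_{f^{2^n}}(x_i x_j)/2^n and c_{f^{2^n}}(x_i^{2^{n−1}} x_j^{2^{n−1}})/2 are integers, and they satisfy the congruence c_{f^{2^n}}(x_i x_j)/2^n + c_{f^{2^n}}(x_i^{2^{n−1}} x_j^{2^{n−1}})/2 ≡ (c_f(1) + 1) · c_f(x_i) · c_f(x_j) (mod 2), where c_f(1) is the constant term of f and c_f(x_i), c_f(x_j) are the coefficients of x_i and x_j in f. -/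

import Mathlib

open MvPolynomial Finsupp

section Aux

variable {σ : Type*} [DecidableEq σ]

private lemma antidiag_pair {i j : σ} (hij : i ≠ j) :
    Finset.HasAntidiagonal.antidiagonal (single i 1 + single j 1 : σ →₀ ℕ) =
      {((0 : σ →₀ ℕ), single i 1 + single j 1), (single i 1, single j 1),
       (single j 1, single i 1), (single i 1 + single j 1, 0)} := by
  ext ⟨β, γ⟩
  simp only [Finset.HasAntidiagonal.mem_antidiagonal, Finset.mem_insert, Finset.mem_singleton, Prod.mk.injEq]
  constructor
  · intro h
    have hcomp : ∀ k, β k + γ k = (single i 1 : σ →₀ ℕ) k + (single j 1 : σ →₀ ℕ) k := by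
      intro k; rw [← Finsupp.add_apply, ← Finsupp.add_apply, h]
    have hi : β i + γ i = 1 := by
      have := hcomp i
      rwa [single_eq_same, single_eq_of_ne hij, add_zero] at this
    have hj : β j + γ j = 1 := by
      have := hcomp j
      rwa [single_eq_same, single_eq_of_ne (Ne.symm hij), zero_add] at this
    have hk : ∀ k, k ≠ i → k ≠ j → β k = 0 ∧ γ k = 0 := by
      intro k hki hkj
      have := hcomp k
      rw [single_eq_of_ne hki, single_eq_of_ne hkj] at this
      omega
    have hβ : β = single i (β i) + single j (β j) := by
      ext k
      rw [Finsupp.add_apply]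
      by_cases hki : k = i
      · subst hki; rw [single_eq_same, single_eq_of_ne hij, add_zero]
      · by_cases hkj : k = j
        · subst hkj; rw [single_eq_of_ne (Ne.symm hij), single_eq_same, zero_add]
        · rw [single_eq_of_ne hki, single_eq_of_ne hkj, add_zero]
          exact (hk k hki hkj).1
    have hγ : γ = single i (γ i) + single j (γ j) := by
      ext k
      rw [Finsupp.add_apply]
      by_cases hki : k = i
      · subst hki; rw [single_eq_same, single_eq_of_ne hij, add_zero]
      · by_cases hkj : k = j
        · subst hkj; rw [single_eq_of_ne (Ne.symm hij), single_eq_same, zero_add]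
        · rw [single_eq_of_ne hki, single_eq_of_ne hkj, add_zero]
          exact (hk k hki hkj).2
    obtain hb | hb : β i = 0 ∨ β i = 1 := by omega
    all_goals obtain hb' | hb' : β j = 0 ∨ β j = 1 := by omega
    · exact Or.inl ⟨by rw [hβ, hb, hb']; simp,
        by rw [hγ, show γ i = 1 by omega, show γ j = 1 by omega]⟩
    · exact Or.inr (Or.inr (Or.inl ⟨by rw [hβ, hb, hb']; simp,
        by rw [hγ, show γ i = 1 by omega, show γ j = 0 by omega]; simp⟩))
    · exact Or.inr (Or.inl ⟨by rw [hβ, hb, hb']; simp,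
        by rw [hγ, show γ i = 0 by omega, show γ j = 1 by omega]; simp⟩)
    · exact Or.inr (Or.inr (Or.inr ⟨by rw [hβ, hb, hb'],
        by rw [hγ, show γ i = 0 by omega, show γ j = 0 by omega]; simp⟩))
  · rintro (⟨rfl, rfl⟩ | ⟨rfl, rfl⟩ | ⟨rfl, rfl⟩ | ⟨rfl, rfl⟩) <;> abel

private lemma coeff_zero_mul' {R : Type*} [CommSemiring R] (p q : MvPolynomial σ R) :
    MvPolynomial.coeff 0 (p * q) = MvPolynomial.coeff 0 p * MvPolynomial.coeff 0 q := by
  rw [MvPolynomial.coeff_mul]; simp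

private lemma coeff_single_mul {R : Type*} [CommSemiring R] (i : σ) (p q : MvPolynomial σ R) :
    coeff (single i 1) (p * q)
      = coeff 0 p * coeff (single i 1) q + coeff (single i 1) p * coeff 0 q := by
  rw [MvPolynomial.coeff_mul, Finsupp.antidiagonal_single]
  rw [show Finset.HasAntidiagonal.antidiagonal (1:ℕ) = {(0,1),(1,0)} from by decide]
  simp

private lemma coeff_pair_mul {R : Type*} [CommSemiring R] {i j : σ} (hij : i ≠ j)
    (p q : MvPolynomial σ R) :
    coeff (single i 1 + single j 1) (p * q)
      = coeff 0 p * coeff (single i 1 + single j 1) q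
        + coeff (single i 1) p * coeff (single j 1) q
        + coeff (single j 1) p * coeff (single i 1) q
        + coeff (single i 1 + single j 1) p * coeff 0 q := by
  have h1 : (single i 1 : σ →₀ ℕ) ≠ 0 := by simp
  have h2 : (single j 1 : σ →₀ ℕ) ≠ 0 := by simp
  have h3 : (single i 1 : σ →₀ ℕ) ≠ single j 1 := by
    simp [Finsupp.single_eq_single_iff, hij]
  have h4 : (single i 1 + single j 1 : σ →₀ ℕ) ≠ 0 := by
    intro h
    have := DFunLike.congr_fun h i
    simp [Finsupp.add_apply, single_eq_same, single_eq_of_ne (Ne.symm hij)] at this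
  have h5 : (single i 1 : σ →₀ ℕ) ≠ single i 1 + single j 1 := by
    intro h
    have := DFunLike.congr_fun h j
    simp [Finsupp.add_apply, single_eq_same, single_eq_of_ne hij] at this
  have h6 : (single j 1 : σ →₀ ℕ) ≠ single i 1 + single j 1 := by
    intro h
    have := DFunLike.congr_fun h i
    simp [Finsupp.add_apply, single_eq_same, single_eq_of_ne (Ne.symm hij)] at this
  rw [MvPolynomial.coeff_mul, antidiag_pair hij]
  rw [Finset.sum_insert (by simp [Prod.ext_iff, h4.symm, h1.symm, h2.symm]),
      Finset.sum_insert (by simp [Prod.ext_iff, h3, h5]),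
      Finset.sum_insert (by simp [Prod.ext_iff, h6]),
      Finset.sum_singleton]
  ring

variable {R : Type*} [CommRing R] (f : MvPolynomial σ R)

private lemma coeff_zero_pow (N : ℕ) : coeff 0 (f ^ N) = (coeff 0 f) ^ N := by
  induction N with
  | zero => simp
  | succ k ih => rw [pow_succ, coeff_zero_mul', ih, pow_succ]

private lemma pow_two_split (k : ℕ) : f ^ 2 ^ (k + 1) = f ^ 2 ^ k * f ^ 2 ^ k := by
  rw [← pow_add, ← two_mul, ← pow_succ']

private lemma coeff_single_pow (i : σ) (k : ℕ) :
    coeff (single i 1) (f ^ 2 ^ k)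
      = 2 ^ k * (coeff 0 f) ^ (2 ^ k - 1) * coeff (single i 1) f := by
  induction k with
  | zero => simp
  | succ k ih =>
    have h1 : (1:ℕ) ≤ 2 ^ k := Nat.one_le_two_pow
    have he : (coeff 0 f) ^ (2 ^ (k+1) - 1)
        = (coeff 0 f) ^ (2 ^ k) * (coeff 0 f) ^ (2 ^ k - 1) := by
      rw [← pow_add]; congr 1; omega
    rw [pow_two_split, coeff_single_mul, ih, coeff_zero_pow, he,
        show ((2:R) ^ (k+1)) = 2 ^ k + 2 ^ k by rw [pow_succ]; ring]
    ring

private lemma coeff_pair_pow {i j : σ} (hij : i ≠ j) (k : ℕ) (hk : 1 ≤ k) :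
    coeff (single i 1 + single j 1) (f ^ 2 ^ k)
      = 2 ^ k * (coeff 0 f) ^ (2 ^ k - 1) * coeff (single i 1 + single j 1) f
        + 2 ^ k * (2 ^ k - 1) * (coeff 0 f) ^ (2 ^ k - 2)
            * coeff (single i 1) f * coeff (single j 1) f := by
  induction k, hk using Nat.le_induction with
  | base =>
    rw [show (2:ℕ)^1 = 2 from rfl, pow_two, coeff_pair_mul hij]
    ring
  | succ k hk ih =>
    have h2 : (2:ℕ) ≤ 2 ^ k := by
      calc (2:ℕ) = 2 ^ 1 := rfl
      _ ≤ 2 ^ k := Nat.pow_le_pow_right (by norm_num) hk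
    set a := coeff 0 f
    have e1 : a ^ (2 ^ (k+1) - 1) = a ^ (2 ^ k) * a ^ (2 ^ k - 1) := by
      rw [← pow_add]; congr 1; omega
    have e2 : a ^ (2 ^ (k+1) - 2) = a ^ (2 ^ k) * a ^ (2 ^ k - 2) := by
      rw [← pow_add]; congr 1; omega
    have e3 : a ^ (2 ^ k - 1) * a ^ (2 ^ k - 1) = a ^ (2 ^ k) * a ^ (2 ^ k - 2) := by
      rw [← pow_add, ← pow_add]; congr 1; omega
    rw [pow_two_split, coeff_pair_mul hij, ih, coeff_single_pow, coeff_single_pow,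
        coeff_zero_pow, e1, e2,
        show ((2:R) ^ (k+1)) = 2 * 2 ^ k by rw [pow_succ]; ring]
    linear_combination (2 * 2 ^ k * 2 ^ k * coeff (single i 1) f * coeff (single j 1) f : R) * e3

private lemma expand_expand' {R : Type*} [CommSemiring R] (a b : ℕ) (p : MvPolynomial σ R) :
    expand a (expand b p) = expand (a * b) p := by
  have : (expand a).comp (expand b) = (expand (a * b) : MvPolynomial σ R →ₐ[R] _) := by
    apply MvPolynomial.algHom_ext
    intro i
    simp [pow_mul, mul_comm]
  exact DFunLike.congr_fun this p

private lemma expand_monomial' {R : Type*} [CommSemiring R] (M : ℕ) (v : σ →₀ ℕ) (r : R) :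
    expand M (monomial v r) = monomial (M • v) r := by
  rw [expand_monomial, monomial_eq]

private lemma coeff_expand' {R : Type*} [CommSemiring R] {M : ℕ} (hM : M ≠ 0) (β : σ →₀ ℕ)
    (p : MvPolynomial σ R) :
    coeff (M • β) (expand M p) = coeff β p := by
  conv_lhs => rw [← support_sum_monomial_coeff p]
  rw [map_sum]
  simp_rw [expand_monomial']
  rw [MvPolynomial.coeff_sum]
  simp_rw [MvPolynomial.coeff_monomial]
  have hinj : ∀ v : σ →₀ ℕ, M • v = M • β ↔ v = β := by
    intro v
    constructor
    · intro h; ext k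
      have := DFunLike.congr_fun h k
      simp only [Finsupp.smul_apply, smul_eq_mul] at this
      exact Nat.eq_of_mul_eq_mul_left (Nat.pos_of_ne_zero hM) this
    · rintro rfl; rfl
  simp_rw [hinj]
  rw [Finset.sum_ite_eq' p.support β (fun v => coeff v p)]
  split_ifs with h
  · rfl
  · exact (MvPolynomial.notMem_support_iff.mp h).symm

private lemma frob_iter (p : MvPolynomial σ (ZMod 2)) (k : ℕ) :
    p ^ 2 ^ k = expand (2 ^ k) p := by
  haveI : Fact (Nat.Prime 2) := ⟨Nat.prime_two⟩
  induction k with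
  | zero => simp [expand_one_apply]
  | succ k ih =>
    have : p ^ 2 ^ (k + 1) = (p ^ 2 ^ k) ^ 2 := by rw [← pow_mul, pow_succ]
    rw [this, ih, ← MvPolynomial.expand_zmod, expand_expand', pow_succ, mul_comm]

private lemma two_coeff (p : MvPolynomial σ (ZMod 4)) (α : σ →₀ ℕ) :
    coeff α (2 * p) = 2 * coeff α p := by
  rw [show (2 : MvPolynomial σ (ZMod 4)) = C 2 from by rw [map_ofNat], MvPolynomial.coeff_C_mul]

private lemma zmod4_sq_eq (P D : MvPolynomial σ (ZMod 4))
    (hD : ∀ α, 2 * coeff α D = 0) : (P + D) ^ 2 = P ^ 2 := by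
  have hDD : D * D = 0 := by
    apply MvPolynomial.ext
    intro α
    rw [MvPolynomial.coeff_mul, MvPolynomial.coeff_zero]
    apply Finset.sum_eq_zero
    intro x _
    have : ∀ u v : ZMod 4, 2 * u = 0 → 2 * v = 0 → u * v = 0 := by decide
    exact this _ _ (hD x.1) (hD x.2)
  have hPD : 2 * (P * D) = 0 := by
    apply MvPolynomial.ext
    intro α
    rw [two_coeff, MvPolynomial.coeff_mul, MvPolynomial.coeff_zero, Finset.mul_sum]
    apply Finset.sum_eq_zero
    intro x _
    calc 2 * (coeff x.1 P * coeff x.2 D) = coeff x.1 P * (2 * coeff x.2 D) := by ring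
    _ = 0 := by rw [hD x.2, mul_zero]
  have : (P + D) ^ 2 = P ^ 2 + 2 * (P * D) + D * D := by ring
  rw [this, hPD, hDD, add_zero, add_zero]

private lemma coeff_big (F : MvPolynomial σ (ZMod 4)) {i j : σ} (hij : i ≠ j) (k : ℕ) :
    coeff (single i (2 ^ k) + single j (2 ^ k)) (F ^ 2 ^ (k + 1))
      = 2 * (coeff 0 F * coeff (single i 1 + single j 1) F
          + coeff (single i 1) F * coeff (single j 1) F) := by
  have hD : ∀ α, 2 * coeff α (F ^ 2 ^ k - expand (2 ^ k) F) = 0 := by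
    have hmap : map (ZMod.castHom (by norm_num : (2:ℕ) ∣ 4) (ZMod 2))
        (F ^ 2 ^ k - expand (2 ^ k) F) = 0 := by
      rw [map_sub, map_pow, map_expand, frob_iter, sub_self]
    intro α
    have h0 : (ZMod.castHom (by norm_num : (2:ℕ) ∣ 4) (ZMod 2))
        (coeff α (F ^ 2 ^ k - expand (2 ^ k) F)) = 0 := by
      rw [← MvPolynomial.coeff_map, hmap, MvPolynomial.coeff_zero]
    have hq : ∀ x : ZMod 4, (ZMod.cast x : ZMod 2) = 0 → 2 * x = 0 := by decide
    rw [ZMod.castHom_apply] at h0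
    exact hq _ h0
  have hsq : F ^ 2 ^ (k + 1) = expand (2 ^ k) (F ^ 2) := by
    have h1 : F ^ 2 ^ (k + 1) = (F ^ 2 ^ k) ^ 2 := by rw [← pow_mul, pow_succ]
    have h2 : F ^ 2 ^ k = expand (2 ^ k) F + (F ^ 2 ^ k - expand (2 ^ k) F) := by ring
    rw [h1, h2, zmod4_sq_eq _ _ hD, ← map_pow]
  have hmono : (single i (2 ^ k) + single j (2 ^ k) : σ →₀ ℕ)
      = (2 ^ k) • (single i 1 + single j 1) := by
    rw [smul_add, Finsupp.smul_single, Finsupp.smul_single, smul_eq_mul, mul_one]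
  rw [hsq, hmono, coeff_expand' (by positivity), pow_two, coeff_pair_mul hij]
  ring

private lemma zmod2_pow (x : ZMod 2) {e : ℕ} (he : e ≠ 0) : x ^ e = x := by
  induction e with
  | zero => exact absurd rfl he
  | succ e ih =>
    rcases Nat.eq_zero_or_pos e with h | h
    · subst h; rw [pow_one]
    · have hxx : ∀ y : ZMod 2, y * y = y := by decide
      rw [pow_succ, ih (by omega), hxx]

end Aux

/-- Lemma 2.1 of the paper: `c_{f^{2^n}}(x_i x_j)/2^n` and
`c_{f^{2^n}}(x_i^{2^{n-1}} x_j^{2^{n-1}})/2` are integers, and their sum is congruent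
to `(c_f(1)+1)·c_f(x_i)·c_f(x_j)` modulo `2`. -/
theorem stmt_4 (n m : ℕ) (hn : 2 ≤ n) (hm : 2 ≤ m)
    (f : MvPolynomial (Fin m) ℤ) (i j : Fin m) (hij : i < j) :
    (2 : ℤ) ^ n ∣ MvPolynomial.coeff (Finsupp.single i 1 + Finsupp.single j 1) (f ^ 2 ^ n) ∧
    (2 : ℤ) ∣ MvPolynomial.coeff
        (Finsupp.single i (2 ^ (n - 1)) + Finsupp.single j (2 ^ (n - 1))) (f ^ 2 ^ n) ∧
    MvPolynomial.coeff (Finsupp.single i 1 + Finsupp.single j 1) (f ^ 2 ^ n) / 2 ^ n +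
        MvPolynomial.coeff
          (Finsupp.single i (2 ^ (n - 1)) + Finsupp.single j (2 ^ (n - 1))) (f ^ 2 ^ n) / 2 ≡
      (MvPolynomial.coeff 0 f + 1) * MvPolynomial.coeff (Finsupp.single i 1) f *
        MvPolynomial.coeff (Finsupp.single j 1) f [ZMOD 2] := by
  obtain ⟨k, rfl⟩ : ∃ k, n = k + 1 := ⟨n - 1, by omega⟩
  have hk : 1 ≤ k := by omega
  have hne : i ≠ j := hij.ne
  set a := MvPolynomial.coeff 0 f with ha
  set b := MvPolynomial.coeff (Finsupp.single i 1) f with hb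
  set c := MvPolynomial.coeff (Finsupp.single j 1) f with hc
  set d := MvPolynomial.coeff (Finsupp.single i 1 + Finsupp.single j 1) f with hd
  -- Part 1
  have hpart1 := coeff_pair_pow f hne (k + 1) (by omega)
  set u : ℤ := a ^ (2 ^ (k+1) - 1) * d + (2 ^ (k+1) - 1) * a ^ (2 ^ (k+1) - 2) * b * c with hu
  have hP1 : MvPolynomial.coeff (Finsupp.single i 1 + Finsupp.single j 1) (f ^ 2 ^ (k+1))
      = 2 ^ (k+1) * u := by rw [hpart1, hu]; ring
  have hdvd1 : (2:ℤ) ^ (k+1) ∣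
      MvPolynomial.coeff (Finsupp.single i 1 + Finsupp.single j 1) (f ^ 2 ^ (k+1)) :=
    ⟨u, hP1⟩
  have hq1 : MvPolynomial.coeff (Finsupp.single i 1 + Finsupp.single j 1) (f ^ 2 ^ (k+1))
      / 2 ^ (k+1) = u := by
    rw [hP1]
    exact Int.mul_ediv_cancel_left u (by positivity)
  -- Part 2
  have hsub : k + 1 - 1 = k := rfl
  set E := MvPolynomial.coeff
      (Finsupp.single i (2 ^ (k + 1 - 1)) + Finsupp.single j (2 ^ (k + 1 - 1)))
      (f ^ 2 ^ (k+1)) with hE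
  set t : ℤ := a * d + b * c with ht
  have hcast : (E : ZMod 4) = ((2 * t : ℤ) : ZMod 4) := by
    have hbig := coeff_big (map (Int.castRingHom (ZMod 4)) f) hne k
    rw [hE, hsub]
    have : ((MvPolynomial.coeff (Finsupp.single i (2 ^ k) + Finsupp.single j (2 ^ k))
        (f ^ 2 ^ (k+1)) : ℤ) : ZMod 4)
        = MvPolynomial.coeff (Finsupp.single i (2 ^ k) + Finsupp.single j (2 ^ k))
          ((map (Int.castRingHom (ZMod 4)) f) ^ 2 ^ (k+1)) := by
      rw [← map_pow, MvPolynomial.coeff_map]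
      simp
    rw [this, hbig]
    simp only [MvPolynomial.coeff_map, Int.coe_castRingHom]
    rw [ht, ha, hb, hc, hd]
    push_cast
    ring
  have hmod4 : E ≡ 2 * t [ZMOD 4] := (ZMod.intCast_eq_intCast_iff _ _ _).mp hcast
  obtain ⟨s, hs⟩ : (4:ℤ) ∣ 2 * t - E := hmod4.dvd
  have hEeq : E = 2 * (t - 2 * s) := by omega
  have hdvd2 : (2:ℤ) ∣ E := ⟨t - 2 * s, hEeq⟩
  have hq2 : E / 2 = t - 2 * s := by
    rw [hEeq]; exact Int.mul_ediv_cancel_left _ two_ne_zero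
  refine ⟨hdvd1, hdvd2, ?_⟩
  rw [hq1, hq2]
  have h2z : (2 : ZMod 2) = 0 := by decide
  have e1 : ((a : ZMod 2)) ^ (2 ^ (k+1) - 1) = (a : ZMod 2) := by
    refine zmod2_pow _ ?_
    have : (2:ℕ) ≤ 2 ^ (k+1) := by
      calc (2:ℕ) = 2 ^ 1 := rfl
      _ ≤ 2 ^ (k+1) := Nat.pow_le_pow_right (by norm_num) (by omega)
    omega
  have e2 : ((a : ZMod 2)) ^ (2 ^ (k+1) - 2) = (a : ZMod 2) := by
    refine zmod2_pow _ ?_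
    have h4 : (4:ℕ) ≤ 2 ^ (k+1) := by
      calc (4:ℕ) = 2 ^ 2 := rfl
      _ ≤ 2 ^ (k+1) := Nat.pow_le_pow_right (by norm_num) (by omega)
    omega
  have h2pow : ((2 : ZMod 2)) ^ (k+1) = 0 := by rw [h2z]; exact zero_pow (by omega)
  have hzero : (((u + (t - 2 * s) - (a + 1) * b * c) : ℤ) : ZMod 2) = 0 := by
    rw [hu, ht]
    push_cast
    rw [e1, e2, h2pow]
    linear_combination ((a : ZMod 2) * (d : ZMod 2)
      - (a : ZMod 2) * (b : ZMod 2) * (c : ZMod 2) - (s : ZMod 2)) * h2z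
  have hdvd3 : (2 : ℤ) ∣ (u + (t - 2 * s) - (a + 1) * b * c) := by
    exact_mod_cast (ZMod.intCast_zmod_eq_zero_iff_dvd _ 2).mp hzero
  exact Int.modEq_iff_dvd.mpr (dvd_sub_comm.mp hdvd3)
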